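/- arXiv:1211.4598 — 4 statements merged into one kernel-verified Lean document; each statement's English description precedes it below -/
import Mathlib

section
/- Let W* : Ω → ℝ be a measurable function with W* > 0 P-almost surely, and let 𝓚 be a set of nonnegative measurable functions X : Ω → ℝ such that E[X/W*] ≤ 1 for every X ∈ 𝓚. Then 𝓚 is bounded in probability: for every ε > 0 there exists c > 0 such that P(X > c) ≤ ε for all X ∈ 𝓚. -/
open MeasureTheory Filter
open scoped Topology
open scoped ENNReal

/-- If `W* > 0` a.s. and `𝓚` is a set of nonnegative measurable functions
with `E[X/W*] ≤ 1` for each `X ∈ 𝓚`, then `𝓚` is bounded in probability: for every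
`ε > 0` there is `c > 0` with `P(X > c) ≤ ε` for all `X ∈ 𝓚`. -/
theorem stmt3 {Ω : Type*} [MeasurableSpace Ω] (P : Measure Ω) [IsProbabilityMeasure P]
    (Wstar : Ω → ℝ) (hW_meas : Measurable Wstar) (hW_pos : ∀ᵐ ω ∂P, 0 < Wstar ω)
    (𝓚 : Set (Ω → ℝ))
    (h𝓚_meas : ∀ X ∈ 𝓚, Measurable X)
    (h𝓚_nonneg : ∀ X ∈ 𝓚, ∀ ω, 0 ≤ X ω)
    (h𝓚_exp : ∀ X ∈ 𝓚, ∫⁻ ω, ENNReal.ofReal (X ω / Wstar ω) ∂P ≤ 1) :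
    ∀ ε > (0 : ℝ), ∃ c > (0 : ℝ), ∀ X ∈ 𝓚, P {ω | c < X ω} ≤ ENNReal.ofReal ε := by
  intro ε hε
  -- Step 1: find M > 0 with P(W* > M) ≤ ε/2
  set s : ℕ → Set Ω := fun n => {ω | (n : ℝ) + 1 < Wstar ω} with hs_def
  have hs_meas : ∀ n, NullMeasurableSet (s n) P := fun n =>
    (measurableSet_lt measurable_const hW_meas).nullMeasurableSet
  have hs_anti : Antitone s := by
    intro m n hmn ω hω
    simp only [hs_def, Set.mem_setOf_eq] at *
    have : (m : ℝ) ≤ n := by exact_mod_cast hmn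
    linarith
  have hs_iInter : (⋂ n, s n) = ∅ := by
    rw [Set.eq_empty_iff_forall_notMem]
    intro ω hω
    obtain ⟨m, hm⟩ := exists_nat_ge (Wstar ω)
    have := Set.mem_iInter.mp hω m
    simp only [hs_def, Set.mem_setOf_eq] at this
    linarith
  have htend : Tendsto (P ∘ s) atTop (𝓝 0) := by
    have := tendsto_measure_iInter_atTop (μ := P) hs_meas hs_anti ⟨0, measure_ne_top P _⟩
    rwa [hs_iInter, measure_empty] at this
  have hε2 : (0 : ℝ≥0∞) < ENNReal.ofReal (ε / 2) := by
    rw [ENNReal.ofReal_pos]; linarith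
  obtain ⟨n, hn⟩ := (htend.eventually_le_const hε2).exists
  set M : ℝ := (n : ℝ) + 1 with hM_def
  have hM_pos : (0 : ℝ) < M := by positivity
  -- Step 2: choose c
  refine ⟨max 1 (2 * M / ε), lt_of_lt_of_le one_pos (le_max_left _ _), ?_⟩
  set c : ℝ := max 1 (2 * M / ε) with hc_def
  have hc_pos : (0 : ℝ) < c := lt_of_lt_of_le one_pos (le_max_left _ _)
  have hcM : M / c ≤ ε / 2 := by
    rw [div_le_iff₀ hc_pos]
    have h1 : 2 * M / ε ≤ c := le_max_right _ _
    calc M = ε / 2 * (2 * M / ε) := by field_simp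
    _ ≤ ε / 2 * c := mul_le_mul_of_nonneg_left h1 (by linarith)
  intro X hX
  set T : Set Ω := {ω | ENNReal.ofReal (c / M) ≤ ENNReal.ofReal (X ω / Wstar ω)} with hT_def
  have hsub : ({ω | c < X ω} ∩ {ω | 0 < Wstar ω} : Set Ω) ⊆ s n ∪ T := by
    rintro ω ⟨hωX, hωW⟩
    simp only [Set.mem_setOf_eq] at hωX hωW
    by_cases hωM : M < Wstar ω
    · exact Or.inl hωM
    · push_neg at hωM
      refine Or.inr ?_
      simp only [hT_def, Set.mem_setOf_eq]
      apply ENNReal.ofReal_le_ofReal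
      rw [div_le_div_iff₀ hM_pos hωW]
      nlinarith
  set S : Set Ω := {ω | c < X ω} ∩ {ω | 0 < Wstar ω} with hS_def
  have hae : {ω | c < X ω} ≤ᵐ[P] S := by
    filter_upwards [hW_pos] with ω hω hmem
    exact ⟨hmem, hω⟩
  have hMarkov : P T ≤ ENNReal.ofReal (ε / 2) := by
    have hf : AEMeasurable (fun ω => ENNReal.ofReal (X ω / Wstar ω)) P :=
      (((h𝓚_meas X hX).div hW_meas).ennreal_ofReal).aemeasurable
    have hcM0 : (0 : ℝ) < c / M := div_pos hc_pos hM_pos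
    have h := meas_ge_le_lintegral_div (μ := P) hf
      (ε := ENNReal.ofReal (c / M)) (by simp [ENNReal.ofReal_pos.mpr hcM0, ne_of_gt])
      ENNReal.ofReal_ne_top
    refine h.trans ?_
    calc (∫⁻ ω, ENNReal.ofReal (X ω / Wstar ω) ∂P) / ENNReal.ofReal (c / M)
        ≤ 1 / ENNReal.ofReal (c / M) := by gcongr; exact h𝓚_exp X hX
      _ = ENNReal.ofReal (M / c) := by
          rw [one_div, ← ENNReal.ofReal_inv_of_pos hcM0, inv_div]
      _ ≤ ENNReal.ofReal (ε / 2) := ENNReal.ofReal_le_ofReal hcM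
  calc P {ω | c < X ω} ≤ P S := measure_mono_ae hae
    _ ≤ P (s n ∪ T) := measure_mono hsub
    _ ≤ P (s n) + P T := measure_union_le _ _
    _ ≤ ENNReal.ofReal (ε / 2) + ENNReal.ofReal (ε / 2) := add_le_add hn hMarkov
    _ = ENNReal.ofReal ε := by
        rw [← ENNReal.ofReal_add (by linarith) (by linarith)]; norm_num
end

section
/- Let U : (0,∞) → ℝ be strictly increasing, concave, and differentiable with U′(y) → 0 as y → +∞, extended to 0 by U(0) := lim_{y→0+} U(y) ∈ [−∞, ∞). Let (ξ_n)_{n∈ℕ} be a sequence of nonnegative random variables with sup_n E[ξ_n] < ∞. Then each positive part U(ξ_n)⁺ is integrable and the family (U(ξ_n)⁺)_{n∈ℕ} is uniformly integrable: for every ε > 0 there exists K > 0 such that sup_n E[U(ξ_n)⁺ · 1_{{U(ξ_n)⁺ ≥ K}}] ≤ ε. -/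
open MeasureTheory Filter Topology

/-- The positive part of the utility `U`, extended to `y ≤ 0` by the right limit of
`max (U ·) 0` at `0⁺` (which equals `sInf` of `max (U ·) 0` over `(0,∞)` since this
function is nondecreasing; it is `0` when `U(0+) = -∞`). -/
noncomputable def Upos (U : ℝ → ℝ) (y : ℝ) : ℝ :=
  if 0 < y then max (U y) 0 else sInf ((fun z => max (U z) 0) '' Set.Ioi 0)

lemma Upos_nonneg (U : ℝ → ℝ) (y : ℝ) : 0 ≤ Upos U y := by
  unfold Upos
  split_ifs with h
  · exact le_max_right _ _
  · exact le_csInf ⟨max (U 1) 0, ⟨1, by norm_num, rfl⟩⟩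
      (by rintro b ⟨z, hz, rfl⟩; exact le_max_right _ _)

lemma Upos_monotone {U : ℝ → ℝ} (hmono : StrictMonoOn U (Set.Ioi 0)) :
    Monotone (Upos U) := by
  intro x y hxy
  unfold Upos
  split_ifs with hx hy hy
  · rcases eq_or_lt_of_le hxy with rfl | hlt
    · exact le_rfl
    · exact max_le_max (hmono hx (lt_trans hx hlt) hlt).le le_rfl
  · exact absurd (lt_of_lt_of_le hx hxy) hy
  · exact csInf_le ⟨0, by rintro b ⟨z, hz, rfl⟩; exact le_max_right _ _⟩ ⟨y, hy, rfl⟩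
  · exact le_rfl

/-- The tangent-line bound: a concave differentiable function lies below its tangents. -/
lemma tangent_le {U U' : ℝ → ℝ} (hconc : ConcaveOn ℝ (Set.Ioi 0) U)
    (hderiv : ∀ y ∈ Set.Ioi (0 : ℝ), HasDerivAt U (U' y) y)
    {M y : ℝ} (hM : M ∈ Set.Ioi (0 : ℝ)) (hy : y ∈ Set.Ioi (0 : ℝ)) :
    U y ≤ U M + U' M * (y - M) := by
  rcases lt_trichotomy y M with h | h | h
  · have hs := hconc.le_slope_of_hasDerivAt hy hM h (hderiv M hM)
    rw [slope_def_field, le_div_iff₀ (by linarith)] at hs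
    nlinarith
  · simp [h]
  · have hs := hconc.slope_le_of_hasDerivAt hM hy h (hderiv M hM)
    rw [slope_def_field, div_le_iff₀ (by linarith)] at hs
    nlinarith

/-- For every `δ > 0` there is `M > 0` with `Upos U y ≤ max (U M) 0 + δ * max y 0`. -/
lemma Upos_linear_bound {U U' : ℝ → ℝ}
    (hconc : ConcaveOn ℝ (Set.Ioi 0) U)
    (hderiv : ∀ y ∈ Set.Ioi (0 : ℝ), HasDerivAt U (U' y) y)
    (hlim : Tendsto U' atTop (𝓝 0)) {δ : ℝ} (hδ : 0 < δ) :
    ∃ M : ℝ, 0 < M ∧ ∀ y : ℝ, Upos U y ≤ max (U M) 0 + δ * max y 0 := by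
  -- derivative is antitone on `(0,∞)`
  have hanti : ∀ x ∈ Set.Ioi (0:ℝ), ∀ z ∈ Set.Ioi (0:ℝ), x ≤ z → U' z ≤ U' x := by
    intro x hx z hz hxz
    rcases eq_or_lt_of_le hxz with rfl | hlt
    · exact le_rfl
    · exact (hconc.le_slope_of_hasDerivAt hx hz hlt (hderiv z hz)).trans
        (hconc.slope_le_of_hasDerivAt hx hz hlt (hderiv x hx))
  -- derivative is nonnegative on `(0,∞)`
  have hnonneg : ∀ x ∈ Set.Ioi (0:ℝ), 0 ≤ U' x := by
    intro x hx
    refine le_of_tendsto hlim ?_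
    filter_upwards [eventually_ge_atTop (max x 1)] with z hz
    exact hanti x hx z (lt_of_lt_of_le (by norm_num : (0:ℝ) < 1)
      ((le_max_right x 1).trans hz)) ((le_max_left x 1).trans hz)
  -- pick `M ≥ 1` with `U' M < δ`
  obtain ⟨M, hMδ, hM1⟩ :=
    ((hlim.eventually (gt_mem_nhds hδ)).and (eventually_ge_atTop (1:ℝ))).exists
  have hM0 : (0:ℝ) < M := lt_of_lt_of_le one_pos hM1
  refine ⟨M, hM0, fun y => ?_⟩
  unfold Upos
  split_ifs with hy
  · have ht := tangent_le hconc hderiv (Set.mem_Ioi.2 hM0) (Set.mem_Ioi.2 hy)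
    have hU'M : 0 ≤ U' M := hnonneg M (Set.mem_Ioi.2 hM0)
    have hUy : U y ≤ U M + δ * y := by nlinarith
    have hmaxy : max y 0 = y := max_eq_left hy.le
    rw [hmaxy]
    refine max_le ?_ ?_
    · exact hUy.trans (add_le_add (le_max_left _ _) le_rfl)
    · have : 0 ≤ δ * y := le_of_lt (mul_pos hδ hy)
      have : 0 ≤ max (U M) 0 := le_max_right _ _
      nlinarith
  · have hmaxy : max y 0 = 0 := max_eq_right (not_lt.1 hy)
    rw [hmaxy, mul_zero, add_zero]
    exact csInf_le ⟨0, by rintro b ⟨z, hz, rfl⟩; exact le_max_right _ _⟩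
      ⟨M, Set.mem_Ioi.2 hM0, rfl⟩

/-- If `U` is strictly increasing, concave and differentiable on `(0,∞)`
with `U' → 0` at `+∞`, and `(ξ_n)` are nonnegative random variables with uniformly
bounded expectations, then the positive parts `U(ξ_n)⁺` are integrable and uniformly
integrable. -/
theorem stmt5 {Ω : Type*} [MeasurableSpace Ω] (P : Measure Ω) [IsProbabilityMeasure P]
    (U U' : ℝ → ℝ)
    (hmono : StrictMonoOn U (Set.Ioi 0))
    (hconc : ConcaveOn ℝ (Set.Ioi 0) U)
    (hderiv : ∀ y ∈ Set.Ioi (0 : ℝ), HasDerivAt U (U' y) y)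
    (hlim : Tendsto U' atTop (𝓝 0))
    (ξ : ℕ → Ω → ℝ) (hξ_meas : ∀ n, Measurable (ξ n))
    (hξ_nonneg : ∀ n, ∀ᵐ ω ∂P, 0 ≤ ξ n ω)
    (hξ_int : ∀ n, Integrable (ξ n) P)
    (C : ℝ) (hC : ∀ n, ∫ ω, ξ n ω ∂P ≤ C) :
    (∀ n, Integrable (fun ω => Upos U (ξ n ω)) P) ∧
    ∀ ε > (0 : ℝ), ∃ K > (0 : ℝ), ∀ n,
      ∫ ω in {ω | K ≤ Upos U (ξ n ω)}, Upos U (ξ n ω) ∂P ≤ ε := by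
  have hfmeas : ∀ n, Measurable (fun ω => Upos U (ξ n ω)) := fun n =>
    ((Upos_monotone hmono).measurable).comp (hξ_meas n)
  have hC0 : 0 ≤ C := le_trans (integral_nonneg_of_ae (hξ_nonneg 0)) (hC 0)
  have hmax_int : ∀ n, Integrable (fun ω => max (ξ n ω) 0) P := fun n =>
    (hξ_int n).pos_part
  have hmaxC : ∀ n, ∫ ω, max (ξ n ω) 0 ∂P ≤ C := by
    intro n
    calc ∫ ω, max (ξ n ω) 0 ∂P = ∫ ω, ξ n ω ∂P :=
          integral_congr_ae ((hξ_nonneg n).mono fun ω h => max_eq_left h)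
      _ ≤ C := hC n
  -- integrability (using the linear bound with δ = 1)
  have hint : ∀ n, Integrable (fun ω => Upos U (ξ n ω)) P := by
    obtain ⟨M₁, hM₁, hb⟩ := Upos_linear_bound hconc hderiv hlim one_pos
    intro n
    refine Integrable.mono' ((integrable_const (max (U M₁) 0)).add
      ((hmax_int n).const_mul 1)) (hfmeas n).aestronglyMeasurable
      (ae_of_all _ fun ω => ?_)
    rw [Real.norm_eq_abs, abs_of_nonneg (Upos_nonneg U _)]
    exact hb (ξ n ω)
  refine ⟨hint, fun ε hε => ?_⟩
  set δ : ℝ := ε / (2 * (C + 1)) with hδdef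
  have hδ : 0 < δ := div_pos hε (by linarith)
  have hδC : δ * C ≤ ε / 2 := by
    have h2 : δ * (C + 1) = ε / 2 := by
      rw [hδdef]; field_simp
    nlinarith
  obtain ⟨M, hM, hbd⟩ := Upos_linear_bound hconc hderiv hlim hδ
  set A : ℝ := max (U M) 0 with hAdef
  have hA : 0 ≤ A := le_max_right _ _
  have hAδC : 0 ≤ A + δ * C := by nlinarith
  set K : ℝ := 2 * A * (A + δ * C) / ε + 1 with hKdef
  have hK : 0 < K := by
    have h0 : 0 ≤ 2 * A * (A + δ * C) / ε := div_nonneg (by nlinarith) hε.le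
    rw [hKdef]; linarith
  have hεK : ε * K = 2 * A * (A + δ * C) + ε := by
    rw [hKdef, mul_add, mul_one, mul_div_cancel₀ _ hε.ne']
  refine ⟨K, hK, fun n => ?_⟩
  set S : Set Ω := {ω | K ≤ Upos U (ξ n ω)} with hSdef
  have hSmeas : MeasurableSet S := measurableSet_le measurable_const (hfmeas n)
  set p : ℝ := (P S).toReal with hpdef
  have hp : 0 ≤ p := ENNReal.toReal_nonneg
  have hg_int : Integrable (fun ω => A + δ * max (ξ n ω) 0) P :=
    (integrable_const A).add ((hmax_int n).const_mul δ)
  -- full-space bound on the dominating function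
  have hg_val : ∫ ω, (A + δ * max (ξ n ω) 0) ∂P ≤ A + δ * C := by
    rw [integral_add (integrable_const A) ((hmax_int n).const_mul δ),
      integral_const, integral_const_mul]
    simp only [measureReal_def, measure_univ, ENNReal.toReal_one, smul_eq_mul, one_mul]
    have := hmaxC n
    nlinarith
  -- Markov's inequality
  have hmar : K * p ≤ A + δ * C := by
    have h1 := mul_meas_ge_le_integral_of_nonneg
      (ae_of_all P fun ω => Upos_nonneg U (ξ n ω)) (hint n) K
    have h2 : ∫ ω, Upos U (ξ n ω) ∂P ≤ ∫ ω, (A + δ * max (ξ n ω) 0) ∂P :=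
      integral_mono (hint n) hg_int fun ω => hbd (ξ n ω)
    calc K * p ≤ ∫ ω, Upos U (ξ n ω) ∂P := h1
      _ ≤ A + δ * C := h2.trans hg_val
  -- bound the tail integral
  have hstep1 : ∫ ω in S, Upos U (ξ n ω) ∂P ≤ ∫ ω in S, (A + δ * max (ξ n ω) 0) ∂P :=
    setIntegral_mono_on ((hint n).integrableOn) (hg_int.integrableOn) hSmeas
      (fun ω _ => hbd (ξ n ω))
  have hstep2 : ∫ ω in S, (A + δ * max (ξ n ω) 0) ∂P ≤ A * p + δ * C := by
    rw [integral_add ((integrable_const A).integrableOn)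
      (((hmax_int n).const_mul δ).integrableOn), integral_const, integral_const_mul]
    simp only [measureReal_def, Measure.restrict_apply_univ, smul_eq_mul]
    rw [← hpdef]
    have h3 : ∫ ω in S, max (ξ n ω) 0 ∂P ≤ C :=
      (setIntegral_le_integral (hmax_int n)
        (ae_of_all P fun ω => le_max_right _ _)).trans (hmaxC n)
    have h4 : 0 ≤ ∫ ω in S, max (ξ n ω) 0 ∂P :=
      setIntegral_nonneg hSmeas fun ω _ => le_max_right _ _
    nlinarith
  -- final arithmetic: `A * p ≤ ε / 2`
  have hAp : A * p ≤ ε / 2 := by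
    nlinarith [mul_le_mul_of_nonneg_left hmar (by linarith : (0:ℝ) ≤ 2 * A)]
  calc ∫ ω in S, Upos U (ξ n ω) ∂P ≤ A * p + δ * C := hstep1.trans hstep2
    _ ≤ ε / 2 + ε / 2 := add_le_add hAp hδC
    _ = ε := by ring
end

section
/- Let U : (0,∞) → ℝ be concave and strictly increasing, let r > 0, and let W be a random variable with 1 + r + W > 0 almost surely and U(1 + r + W) integrable. Let (y_k)_{k∈ℕ} be a sequence in (0,1) with y_k → 0, and let (X_k)_{k∈ℕ} be random variables with X_k ≥ −y_k almost surely, converging almost surely to a random variable X with X ≥ 0 almost surely. Suppose that for every k, E[U(1 + r + X_k + (1 − y_k)W)] ≤ E[U(1 + r + W)] (the left-hand expectation being well defined in (−∞, +∞] since the integrand is bounded below by y_k·U(r) + (1 − y_k)·U(1 + r + W)). Then X = 0 almost surely. -/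
open MeasureTheory Filter Topology

/-- Pointwise concavity/monotonicity bound used in the proof of `stmt8`. -/
lemma stmt8_pointwise {U : ℝ → ℝ} (hconc : ConcaveOn ℝ (Set.Ioi 0) U)
    (hmono : StrictMonoOn U (Set.Ioi 0)) {r : ℝ} (hr : 0 < r)
    {w x t : ℝ} (hw : 0 < 1 + r + w) (ht : t ∈ Set.Ioo (0 : ℝ) 1) (hx : -t ≤ x) :
    t * (U r - U (1 + r + w)) ≤ U (1 + r + x + (1 - t) * w) - U (1 + r + w) := by
  obtain ⟨ht0, ht1⟩ := ht
  set a : ℝ := 1 + r + x / t with ha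
  have hra : r ≤ a := by
    have : (-1 : ℝ) ≤ x / t := by
      rw [le_div_iff₀ ht0]; linarith
    simp only [ha]; linarith
  have haI : a ∈ Set.Ioi (0 : ℝ) := lt_of_lt_of_le hr hra
  have hwI : (1 + r + w) ∈ Set.Ioi (0 : ℝ) := hw
  have hcomb := hconc.2 haI hwI (le_of_lt ht0) (by linarith : (0:ℝ) ≤ 1 - t) (by ring)
  have hpt : t • a + (1 - t) • (1 + r + w) = 1 + r + x + (1 - t) * w := by
    simp only [smul_eq_mul, ha]
    field_simp
    ring
  rw [hpt] at hcomb
  have hUr : U r ≤ U a := hmono.monotoneOn (Set.mem_Ioi.2 hr) haI hra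
  have h1 : t * U r + (1 - t) * U (1 + r + w) ≤ U (1 + r + x + (1 - t) * w) := by
    refine le_trans ?_ hcomb
    have := mul_le_mul_of_nonneg_left hUr (le_of_lt ht0)
    simpa [smul_eq_mul] using add_le_add_right this ((1 - t) * U (1 + r + w))
  nlinarith [h1]

/-- Let `U` be concave and strictly increasing on `(0,∞)`, `r > 0`, and `W`
with `1 + r + W > 0` a.s. and `U(1+r+W)` integrable. If `y_k ∈ (0,1)`, `y_k → 0`,
`X_k ≥ -y_k` a.s., `X_k → X` a.s. with `X ≥ 0` a.s., and for every `k` the (well-defined)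
expectation `E[U(1+r+X_k+(1-y_k)W)]` is at most `E[U(1+r+W)]` (expressed here, equivalently,
as integrability of the integrand together with the inequality of integrals), then `X = 0` a.s. -/
theorem stmt8 {Ω : Type*} [MeasurableSpace Ω] (P : Measure Ω) [IsProbabilityMeasure P]
    (U : ℝ → ℝ)
    (hconc : ConcaveOn ℝ (Set.Ioi 0) U) (hmono : StrictMonoOn U (Set.Ioi 0))
    (r : ℝ) (hr : 0 < r)
    (W : Ω → ℝ) (hW : Measurable W) (hWpos : ∀ᵐ ω ∂P, 0 < 1 + r + W ω)
    (hWint : Integrable (fun ω => U (1 + r + W ω)) P)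
    (y : ℕ → ℝ) (hy : ∀ k, y k ∈ Set.Ioo (0 : ℝ) 1) (hy0 : Tendsto y atTop (𝓝 0))
    (X : ℕ → Ω → ℝ) (hX : ∀ k, Measurable (X k))
    (hXlb : ∀ k, ∀ᵐ ω ∂P, -(y k) ≤ X k ω)
    (Xlim : Ω → ℝ) (hXlim_meas : Measurable Xlim)
    (hconv : ∀ᵐ ω ∂P, Tendsto (fun k => X k ω) atTop (𝓝 (Xlim ω)))
    (hXlim_nonneg : ∀ᵐ ω ∂P, 0 ≤ Xlim ω)
    (hint : ∀ k, Integrable (fun ω => U (1 + r + X k ω + (1 - y k) * W ω)) P)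
    (hineq : ∀ k, ∫ ω, U (1 + r + X k ω + (1 - y k) * W ω) ∂P
                    ≤ ∫ ω, U (1 + r + W ω) ∂P) :
    ∀ᵐ ω ∂P, Xlim ω = 0 := by
  -- Notation
  set f : ℕ → Ω → ℝ := fun k ω => U (1 + r + X k ω + (1 - y k) * W ω) - U (1 + r + W ω)
    with hf_def
  set g : ℕ → Ω → ℝ := fun k ω => y k * (U r - U (1 + r + W ω)) with hg_def
  set D : Ω → ℝ := fun ω => U (1 + r + Xlim ω + W ω) - U (1 + r + W ω) with hD_def
  have hUcont : ContinuousOn U (Set.Ioi 0) := hconc.continuousOn isOpen_Ioi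
  -- Integrability
  have hfint : ∀ k, Integrable (f k) P := fun k => (hint k).sub hWint
  have hgint : ∀ k, Integrable (g k) P :=
    fun k => ((integrable_const (U r)).sub hWint).const_mul (y k)
  have hfgint : ∀ k, Integrable (fun ω => f k ω - g k ω) P := fun k => (hfint k).sub (hgint k)
  -- Pointwise a.e. facts
  have hae : ∀ᵐ ω ∂P, (0 < 1 + r + W ω) ∧ (∀ k, -(y k) ≤ X k ω) ∧
      Tendsto (fun k => X k ω) atTop (𝓝 (Xlim ω)) ∧ 0 ≤ Xlim ω := by
    have h2 : ∀ᵐ ω ∂P, ∀ k, -(y k) ≤ X k ω := (ae_all_iff).2 hXlb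
    filter_upwards [hWpos, h2, hconv, hXlim_nonneg] with ω a b c d using ⟨a, b, c, d⟩
  have hfg_nonneg : ∀ᵐ ω ∂P, ∀ k, 0 ≤ f k ω - g k ω := by
    filter_upwards [hae] with ω ⟨hw, hlb, _, _⟩ k
    have := stmt8_pointwise hconc hmono hr hw (hy k) (hlb k)
    simp only [hf_def, hg_def]; linarith
  -- a.e. convergence of `f k - g k` to `D`
  have hDae : ∀ᵐ ω ∂P, Tendsto (fun k => f k ω - g k ω) atTop (𝓝 (D ω)) := by
    filter_upwards [hae] with ω ⟨hw, hlb, hc, hnn⟩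
    have hptpos : (0 : ℝ) < 1 + r + Xlim ω + W ω := by linarith
    have hZ : Tendsto (fun k => 1 + r + X k ω + (1 - y k) * W ω) atTop
        (𝓝 (1 + r + Xlim ω + W ω)) := by
      have : Tendsto (fun k => 1 + r + X k ω + (1 - y k) * W ω) atTop
          (𝓝 (1 + r + Xlim ω + (1 - 0) * W ω)) :=
        ((tendsto_const_nhds.add hc).add
          (((tendsto_const_nhds.sub hy0).mul tendsto_const_nhds)))
      simpa using this
    have hUat : ContinuousAt U (1 + r + Xlim ω + W ω) :=
      hUcont.continuousAt (isOpen_Ioi.mem_nhds hptpos)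
    have hfU : Tendsto (fun k => f k ω) atTop (𝓝 (D ω)) := by
      simpa [hf_def, hD_def] using (hUat.tendsto.comp hZ).sub
        (tendsto_const_nhds : Tendsto (fun _ : ℕ => U (1 + r + W ω)) atTop _)
    have hgU : Tendsto (fun k => g k ω) atTop (𝓝 0) := by
      have := hy0.mul_const (U r - U (1 + r + W ω))
      simpa [hg_def] using this
    simpa using hfU.sub hgU
  -- Integral bound: ∫ (f k - g k) ≤ c k where c k → 0
  set c : ℕ → ℝ := fun k => y k * ((∫ ω, U (1 + r + W ω) ∂P) - U r) with hc_def
  have hc0 : Tendsto c atTop (𝓝 0) := by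
    have := hy0.mul_const ((∫ ω, U (1 + r + W ω) ∂P) - U r)
    simpa [hc_def] using this
  have hint_bound : ∀ k, ∫ ω, (f k ω - g k ω) ∂P ≤ c k := by
    intro k
    rw [integral_sub (hfint k) (hgint k)]
    have h1 : ∫ ω, f k ω ∂P ≤ 0 := by
      rw [hf_def]
      simp only
      rw [integral_sub (hint k) hWint]
      linarith [hineq k]
    have h2 : ∫ ω, g k ω ∂P = y k * (U r - ∫ ω, U (1 + r + W ω) ∂P) := by
      simp only [hg_def]
      rw [integral_const_mul, integral_sub (integrable_const (U r)) hWint]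
      simp
    rw [h2]; simp only [hc_def]; linarith
  -- Lebesgue-integral Fatou argument
  set F : ℕ → Ω → ENNReal := fun k ω => ENNReal.ofReal (f k ω - g k ω) with hF_def
  have hFmeas : ∀ k, AEMeasurable (F k) P :=
    fun k => (hfgint k).aestronglyMeasurable.aemeasurable.ennreal_ofReal
  have hFlim : ∀ᵐ ω ∂P, Tendsto (fun k => F k ω) atTop (𝓝 (ENNReal.ofReal (D ω))) := by
    filter_upwards [hDae] with ω hω using ENNReal.tendsto_ofReal hω
  have hkey : ∫⁻ ω, ENNReal.ofReal (D ω) ∂P = 0 := by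
    have hle : ∫⁻ ω, ENNReal.ofReal (D ω) ∂P ≤
        liminf (fun k => ∫⁻ ω, F k ω ∂P) atTop := by
      have hcongr : ∫⁻ ω, ENNReal.ofReal (D ω) ∂P
          = ∫⁻ ω, liminf (fun k => F k ω) atTop ∂P := by
        refine lintegral_congr_ae ?_
        filter_upwards [hFlim] with ω hω using hω.liminf_eq.symm
      rw [hcongr]
      exact lintegral_liminf_le' hFmeas
    have hFle : ∀ k, ∫⁻ ω, F k ω ∂P ≤ ENNReal.ofReal (c k) := by
      intro k
      have hnn : 0 ≤ᵐ[P] fun ω => f k ω - g k ω := by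
        filter_upwards [hfg_nonneg] with ω hω using hω k
      rw [hF_def]
      rw [← ofReal_integral_eq_lintegral_ofReal (hfgint k) hnn]
      exact ENNReal.ofReal_le_ofReal (hint_bound k)
    have hliminf0 : liminf (fun k => ∫⁻ ω, F k ω ∂P) atTop = 0 := by
      have htend : Tendsto (fun k => ENNReal.ofReal (c k)) atTop (𝓝 0) := by
        simpa using ENNReal.tendsto_ofReal hc0
      refine le_antisymm ?_ zero_le
      calc liminf (fun k => ∫⁻ ω, F k ω ∂P) atTop
          ≤ liminf (fun k => ENNReal.ofReal (c k)) atTop :=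
            liminf_le_liminf (Eventually.of_forall hFle)
        _ = 0 := htend.liminf_eq
    exact le_antisymm (hle.trans hliminf0.le) zero_le
  -- Deduce D ≤ 0 a.e.
  have hDmeas : AEMeasurable D P :=
    aemeasurable_of_tendsto_metrizable_ae _
      (fun k => (hfgint k).aestronglyMeasurable.aemeasurable) hDae
  have hD0 : ∀ᵐ ω ∂P, ENNReal.ofReal (D ω) = 0 :=
    (lintegral_eq_zero_iff' hDmeas.ennreal_ofReal).1 hkey
  -- Conclude
  filter_upwards [hae, hD0] with ω ⟨hw, _, _, hnn⟩ hzero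
  by_contra hne
  have hpos : 0 < Xlim ω := lt_of_le_of_ne hnn (Ne.symm hne)
  have hlt : U (1 + r + W ω) < U (1 + r + Xlim ω + W ω) :=
    hmono (Set.mem_Ioi.2 hw) (Set.mem_Ioi.2 (by linarith)) (by linarith)
  have : (0 : ℝ) < D ω := by simp only [hD_def]; linarith
  rw [ENNReal.ofReal_eq_zero] at hzero
  linarith
end

section
/- Let m ∈ ℕ, let W ≥ 0 be a random variable, and for l = 1, …, m let W_l > 0 almost surely and Z_l > 0 almost surely be random variables with E[Z_l·W/W_l] ≤ 1. Let β_1, …, β_m ≥ 0 with Σ_{l=1}^m β_l = 1, let b > 0, κ_1, …, κ_m > 0, α > 0, and let A be a measurable set such that Z_l ≥ b·κ_l almost surely on A for each l = 1, …, m. Then E[ min( Σ_{l=1}^m β_l·W/W_l , α ) ] ≤ α·P(Aᶜ) + b⁻¹·Σ_{l=1}^m β_l/κ_l. -/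
open MeasureTheory Filter
open scoped ENNReal BigOperators

/-- If `W ≥ 0`, `W_l > 0` a.s., `Z_l > 0` a.s. with `E[Z_l W / W_l] ≤ 1`,
`β_l ≥ 0` sum to `1`, `b > 0`, `κ_l > 0`, `α > 0`, and `Z_l ≥ b κ_l` a.s. on `A`, then
`E[min(∑ β_l W/W_l, α)] ≤ α P(Aᶜ) + b⁻¹ ∑ β_l/κ_l`. -/
theorem stmt9 {Ω : Type*} [MeasurableSpace Ω] (P : Measure Ω) [IsProbabilityMeasure P]
    (m : ℕ) (W : Ω → ℝ) (hWmeas : Measurable W) (hW : ∀ ω, 0 ≤ W ω)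
    (Wl Zl : Fin m → Ω → ℝ)
    (hWlmeas : ∀ l, Measurable (Wl l)) (hZlmeas : ∀ l, Measurable (Zl l))
    (hWl : ∀ l, ∀ᵐ ω ∂P, 0 < Wl l ω) (hZl : ∀ l, ∀ᵐ ω ∂P, 0 < Zl l ω)
    (hE : ∀ l, ∫⁻ ω, ENNReal.ofReal (Zl l ω * W ω / Wl l ω) ∂P ≤ 1)
    (β : Fin m → ℝ) (hβ : ∀ l, 0 ≤ β l) (hβsum : ∑ l, β l = 1)
    (b : ℝ) (hb : 0 < b) (κ : Fin m → ℝ) (hκ : ∀ l, 0 < κ l)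
    (α : ℝ) (hα : 0 < α)
    (A : Set Ω) (hA : MeasurableSet A)
    (hAZ : ∀ l, ∀ᵐ ω ∂P, ω ∈ A → b * κ l ≤ Zl l ω) :
    ∫ ω, min (∑ l, β l * W ω / Wl l ω) α ∂P
      ≤ α * (P Aᶜ).toReal + b⁻¹ * ∑ l, β l / κ l := by
  classical
  set c : Fin m → ℝ := fun l => β l / (b * κ l) with hc
  have hc_nonneg : ∀ l, 0 ≤ c l := fun l =>
    div_nonneg (hβ l) (le_of_lt (mul_pos hb (hκ l)))
  -- a.e. everything
  have hWl' : ∀ᵐ ω ∂P, ∀ l, 0 < Wl l ω := (ae_all_iff).2 hWl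
  have hZl' : ∀ᵐ ω ∂P, ∀ l, 0 < Zl l ω := (ae_all_iff).2 hZl
  have hAZ' : ∀ᵐ ω ∂P, ∀ l, ω ∈ A → b * κ l ≤ Zl l ω := (ae_all_iff).2 hAZ
  set f : Ω → ℝ := fun ω => ∑ l, β l * W ω / Wl l ω with hf
  set u : Fin m → Ω → ℝ := fun l ω => Zl l ω * W ω / Wl l ω with hu
  have hu_meas : ∀ l, Measurable (u l) := fun l =>
    ((hZlmeas l).mul hWmeas).div (hWlmeas l)
  have hu_nonneg : ∀ l, ∀ᵐ ω ∂P, 0 ≤ u l ω := by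
    intro l
    filter_upwards [hZl l, hWl l] with ω h1 h2
    exact div_nonneg (mul_nonneg h1.le (hW ω)) h2.le
  have hf_meas : Measurable f := by
    apply Finset.measurable_sum
    intro l _
    exact (measurable_const.mul hWmeas).div (hWlmeas l)
  have hf_nonneg : ∀ᵐ ω ∂P, 0 ≤ f ω := by
    filter_upwards [hWl'] with ω h
    exact Finset.sum_nonneg fun l _ =>
      div_nonneg (mul_nonneg (hβ l) (hW ω)) (h l).le
  -- integrability of u l
  have hu_int : ∀ l, Integrable (u l) P := by
    intro l
    refine ⟨(hu_meas l).aestronglyMeasurable, ?_⟩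
    rw [hasFiniteIntegral_iff_ofReal (hu_nonneg l)]
    exact lt_of_le_of_lt (hE l) ENNReal.one_lt_top
  have hu_int_le : ∀ l, ∫ ω, u l ω ∂P ≤ 1 := by
    intro l
    rw [integral_eq_lintegral_of_nonneg_ae (hu_nonneg l) (hu_meas l).aestronglyMeasurable]
    calc (∫⁻ ω, ENNReal.ofReal (u l ω) ∂P).toReal
        ≤ (1 : ℝ≥0∞).toReal := ENNReal.toReal_mono (by simp) (hE l)
      _ = 1 := by simp
  -- the dominating function
  set g : Ω → ℝ :=
    fun ω => α * Set.indicator Aᶜ (fun _ => (1 : ℝ)) ω + ∑ l, c l * u l ω with hg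
  have hg_int : Integrable g P := by
    apply Integrable.add
    · exact (integrable_const (1 : ℝ)).indicator hA.compl |>.const_mul α
    · exact integrable_finset_sum _ fun l _ => (hu_int l).const_mul _
  have h_min_int : Integrable (fun ω => min (f ω) α) P := by
    refine Integrable.mono' (integrable_const α) (hf_meas.min measurable_const).aestronglyMeasurable ?_
    filter_upwards [hf_nonneg] with ω h
    rw [Real.norm_eq_abs, abs_of_nonneg (le_min h hα.le)]
    exact min_le_right _ _
  have h_mono : ∀ᵐ ω ∂P, min (f ω) α ≤ g ω := by
    filter_upwards [hWl', hZl', hAZ'] with ω hw hz haz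
    have hu_nn : ∀ l, 0 ≤ u l ω := fun l =>
      div_nonneg (mul_nonneg (hz l).le (hW ω)) (hw l).le
    have hsum_nonneg : 0 ≤ ∑ l, c l * u l ω :=
      Finset.sum_nonneg fun l _ => mul_nonneg (hc_nonneg l) (hu_nn l)
    by_cases hωA : ω ∈ A
    · have h1 : f ω ≤ ∑ l, c l * u l ω := by
        refine Finset.sum_le_sum fun l _ => ?_
        have hbk : (0:ℝ) < b * κ l := mul_pos hb (hκ l)
        have hβc : β l = c l * (b * κ l) := by
          exact (div_mul_cancel₀ (β l) hbk.ne').symm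
        calc β l * W ω / Wl l ω = β l * (W ω / Wl l ω) := by ring
          _ ≤ (c l * Zl l ω) * (W ω / Wl l ω) := by
              refine mul_le_mul_of_nonneg_right ?_
                (div_nonneg (hW ω) (hw l).le)
              rw [hβc]
              exact mul_le_mul_of_nonneg_left (haz l hωA) (hc_nonneg l)
          _ = c l * u l ω := by rw [hu]; ring
      have : Set.indicator Aᶜ (fun _ => (1:ℝ)) ω = 0 := by
        simp [Set.indicator_of_notMem, hωA]
      rw [hg]
      simp only [this, mul_zero, zero_add]
      exact le_trans (min_le_left _ _) h1
    · have : Set.indicator Aᶜ (fun _ => (1:ℝ)) ω = 1 := by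
        simp [Set.indicator_of_mem, hωA]
      rw [hg]
      simp only [this, mul_one]
      calc min (f ω) α ≤ α := min_le_right _ _
        _ ≤ α + ∑ l, c l * u l ω := le_add_of_nonneg_right hsum_nonneg
  have h_ind : ∫ ω, α * Set.indicator Aᶜ (fun _ => (1:ℝ)) ω ∂P
      = α * (P Aᶜ).toReal := by
    rw [integral_const_mul, integral_indicator_const _ hA.compl]
    simp [Measure.real]
  have hcl_eq : ∀ l, c l = b⁻¹ * (β l / κ l) := by
    intro l
    rw [hc]
    field_simp
  calc ∫ ω, min (f ω) α ∂P ≤ ∫ ω, g ω ∂P := integral_mono_ae h_min_int hg_int h_mono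
    _ = α * (P Aᶜ).toReal + ∑ l, c l * ∫ ω, u l ω ∂P := by
        rw [hg, integral_add ((integrable_const (1 : ℝ)).indicator hA.compl |>.const_mul α)
          (integrable_finset_sum _ fun l _ => (hu_int l).const_mul _), h_ind,
          integral_finset_sum _ fun l _ => (hu_int l).const_mul _]
        simp_rw [integral_const_mul]
    _ ≤ α * (P Aᶜ).toReal + ∑ l, c l * 1 := by
        gcongr with l
        exacts [hc_nonneg l, hu_int_le l]
    _ = α * (P Aᶜ).toReal + b⁻¹ * ∑ l, β l / κ l := by
        simp_rw [mul_one, hcl_eq, ← Finset.mul_sum]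
end
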